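/- Define polynomials P_n(x,z), Q_n(x,z) by the recursions P_n = P_{n-1} - zⁿx·P_{n-2}, Q_n = Q_{n-1} - zⁿx·Q_{n-2} with P_{-1}=0, P₀=Q_{-1}=Q₀=1. Then P_n = ∑_{j≥0} qbinom(n-j, j)·(-1)^j z^{j²+j} x^j and Q_n = ∑_{j≥0} qbinom(n+1-j, j)·(-1)^j z^{j²} x^j, where qbinom denotes the Gaussian (q=z) binomial coefficient. -/

import Mathlib

open Finset

noncomputable def qb (z : ℝ) (m j : ℕ) : ℝ :=
  if j ≤ m then ∏ i ∈ Finset.range j, (1 - z ^ (m - j + i + 1)) / (1 - z ^ (i + 1)) else 0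

lemma qb_zero (z : ℝ) (m : ℕ) : qb z m 0 = 1 := by simp [qb]

lemma qb_of_lt (z : ℝ) {m j : ℕ} (h : m < j) : qb z m j = 0 := by
  rw [qb, if_neg (by omega)]

lemma qb_self (z : ℝ) (hz : ∀ i : ℕ, 1 ≤ i → z ^ i ≠ 1) (m : ℕ) : qb z m m = 1 := by
  rw [qb, if_pos le_rfl]
  apply Finset.prod_eq_one
  intro i _
  have h : m - m + i + 1 = i + 1 := by omega
  rw [h, div_self (sub_ne_zero_of_ne (Ne.symm (hz (i+1) (by omega))))]

lemma qb_pascal (z : ℝ) (hz : ∀ i : ℕ, 1 ≤ i → z ^ i ≠ 1) (m j : ℕ) :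
    qb z (m + 1) (j + 1) = qb z m (j + 1) + z ^ (m - j) * qb z m j := by
  have hden : ∀ i : ℕ, (1 : ℝ) - z ^ (i + 1) ≠ 0 := fun i =>
    sub_ne_zero_of_ne (Ne.symm (hz (i+1) (by omega)))
  rcases lt_trichotomy j m with h | h | h
  · rw [qb, qb, qb, if_pos (by omega), if_pos (by omega), if_pos (by omega)]
    rw [Finset.prod_div_distrib, Finset.prod_div_distrib, Finset.prod_div_distrib]
    have hD' : (∏ i ∈ range j, (1 - z ^ (i+1))) ≠ 0 :=
      Finset.prod_ne_zero_iff.mpr fun i _ => hden i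
    have hD : ∏ i ∈ range (j+1), (1 - z^(i+1))
        = (∏ i ∈ range j, (1 - z^(i+1))) * (1 - z^(j+1)) := Finset.prod_range_succ _ _
    have hN1 : ∏ i ∈ range (j+1), (1 - z ^ (m+1 - (j+1) + i + 1))
        = (∏ i ∈ range j, (1 - z ^ (m - j + i + 1))) * (1 - z ^ (m+1)) := by
      rw [Finset.prod_range_succ]
      congr 1
      · exact Finset.prod_congr rfl fun i _ => by congr 2; omega
      · congr 2; omega
    have hN2 : ∏ i ∈ range (j+1), (1 - z ^ (m - (j+1) + i + 1))
        = (1 - z ^ (m - j)) * ∏ i ∈ range j, (1 - z ^ (m - j + i + 1)) := by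
      rw [Finset.prod_range_succ']
      rw [mul_comm]
      congr 1
      · congr 2; omega
      · exact Finset.prod_congr rfl fun i _ => by congr 2; omega
    rw [hN1, hN2, hD]
    have hp : z ^ (m - j) * z ^ (j + 1) = z ^ (m + 1) := by
      rw [← pow_add]; congr 1; omega
    set N := ∏ i ∈ range j, (1 - z ^ (m - j + i + 1)) with hN
    set D := ∏ i ∈ range j, (1 - z ^ (i+1)) with hDdef
    have h1 : (1:ℝ) - z^(j+1) ≠ 0 := hden j
    have hstep : z^(m-j) * (N/D) = (z^(m-j)*N*(1-z^(j+1)))/(D*(1-z^(j+1))) := by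
      field_simp
    rw [hstep, ← add_div]
    congr 1
    linear_combination N * hp
  · subst h
    rw [qb_self z hz, qb_self z hz, qb_of_lt z (by omega)]
    simp
  · rw [qb_of_lt z (by omega), qb_of_lt z h, qb_of_lt z (by omega)]
    ring

lemma A_rec (x z : ℝ) (hz : ∀ i : ℕ, 1 ≤ i → z ^ i ≠ 1) (n : ℕ) :
    ∑ j ∈ Finset.range (n+3), qb z (n+2-j) j * (-1)^j * z^(j^2+j) * x^j
      = (∑ j ∈ Finset.range (n+2), qb z (n+1-j) j * (-1)^j * z^(j^2+j) * x^j)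
        - z^(n+2) * x * ∑ j ∈ Finset.range (n+1), qb z (n-j) j * (-1)^j * z^(j^2+j) * x^j := by
  set F : ℕ → ℝ := fun j => qb z (n+2-j) j * (-1)^j * z^(j^2+j) * x^j with hF
  set G : ℕ → ℝ := fun j => qb z (n+1-j) j * (-1)^j * z^(j^2+j) * x^j with hG
  set T : ℕ → ℝ := fun j => qb z (n-j) j * (-1)^j * z^(j^2+j) * x^j with hT
  have key : ∀ j ∈ Finset.range (n+1), F (j+1) = G (j+1) + (-(z^(n+2) * x)) * T j := by
    intro j hj
    have hj' : j < n + 1 := Finset.mem_range.mp hj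
    simp only [hF, hG, hT]
    have e1 : n + 2 - (j+1) = (n - j) + 1 := by omega
    have e2 : n + 1 - (j+1) = n - j := by omega
    rw [e1, e2, qb_pascal z hz (n-j) j]
    rcases le_or_gt (j + j) n with h2 | h2
    · have he : (j+1)^2 + (j+1) = (j^2+j) + (2*j+2) := by ring
      rw [he, pow_add]
      have hzz : z ^ (n - j - j) * z ^ (2*j+2) = z ^ (n+2) := by
        rw [← pow_add]; congr 1; omega
      linear_combination ((-1:ℝ)^(j+1) * qb z (n-j) j * z^(j^2+j) * x^(j+1)) * hzz
    · have hq0 : qb z (n-j) j = 0 := qb_of_lt z (by omega)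
      rw [hq0]; ring
  have hF0 : F 0 = 1 := by simp [hF, qb_zero]
  have hG0 : G 0 = 1 := by simp [hG, qb_zero]
  have hFn2 : F (n+2) = 0 := by
    simp only [hF]
    have e : n + 2 - (n+2) = 0 := by omega
    rw [e, qb_of_lt z (by omega)]; ring
  calc ∑ j ∈ Finset.range (n+3), F j
      = ∑ j ∈ Finset.range (n+2), F (j+1) + F 0 := Finset.sum_range_succ' F (n+2)
    _ = (∑ j ∈ Finset.range (n+1), F (j+1) + F (n+2)) + F 0 := by
        rw [Finset.sum_range_succ]
    _ = (∑ j ∈ Finset.range (n+1), (G (j+1) + (-(z^(n+2)*x)) * T j) + F (n+2)) + F 0 := by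
        rw [Finset.sum_congr rfl key]
    _ = ((∑ j ∈ Finset.range (n+1), G (j+1) + G 0)
          + (-(z^(n+2)*x)) * ∑ j ∈ Finset.range (n+1), T j) + (F (n+2) + F 0 - G 0) := by
        rw [Finset.sum_add_distrib, Finset.mul_sum]; ring
    _ = ∑ j ∈ Finset.range (n+2), G j
        - z^(n+2) * x * ∑ j ∈ Finset.range (n+1), T j := by
        rw [← Finset.sum_range_succ' G (n+1), hF0, hG0, hFn2]; ring

lemma B_rec (x z : ℝ) (hz : ∀ i : ℕ, 1 ≤ i → z ^ i ≠ 1) (n : ℕ) :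
    ∑ j ∈ Finset.range (n+3), qb z (n+3-j) j * (-1)^j * z^(j^2) * x^j
      = (∑ j ∈ Finset.range (n+2), qb z (n+2-j) j * (-1)^j * z^(j^2) * x^j)
        - z^(n+2) * x * ∑ j ∈ Finset.range (n+1), qb z (n+1-j) j * (-1)^j * z^(j^2) * x^j := by
  set F : ℕ → ℝ := fun j => qb z (n+3-j) j * (-1)^j * z^(j^2) * x^j with hF
  set G : ℕ → ℝ := fun j => qb z (n+2-j) j * (-1)^j * z^(j^2) * x^j with hG
  set T : ℕ → ℝ := fun j => qb z (n+1-j) j * (-1)^j * z^(j^2) * x^j with hT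
  have key : ∀ j ∈ Finset.range (n+2), F (j+1) = G (j+1) + (-(z^(n+2) * x)) * T j := by
    intro j hj
    have hj' : j < n + 2 := Finset.mem_range.mp hj
    simp only [hF, hG, hT]
    have e1 : n + 3 - (j+1) = (n + 1 - j) + 1 := by omega
    have e2 : n + 2 - (j+1) = n + 1 - j := by omega
    rw [e1, e2, qb_pascal z hz (n+1-j) j]
    rcases le_or_gt (j + j) (n+1) with h2 | h2
    · have he : (j+1)^2 = j^2 + (2*j+1) := by ring
      rw [he, pow_add]
      have hzz : z ^ (n + 1 - j - j) * z ^ (2*j+1) = z ^ (n+2) := by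
        rw [← pow_add]; congr 1; omega
      linear_combination ((-1:ℝ)^(j+1) * qb z (n+1-j) j * z^(j^2) * x^(j+1)) * hzz
    · have hq0 : qb z (n+1-j) j = 0 := qb_of_lt z (by omega)
      rw [hq0]; ring
  have hF0 : F 0 = 1 := by simp [hF, qb_zero]
  have hG0 : G 0 = 1 := by simp [hG, qb_zero]
  have hGn2 : G (n+2) = 0 := by
    simp only [hG]
    have e : n + 2 - (n+2) = 0 := by omega
    rw [e, qb_of_lt z (by omega)]; ring
  have hTn1 : T (n+1) = 0 := by
    simp only [hT]
    have e : n + 1 - (n+1) = 0 := by omega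
    rw [e, qb_of_lt z (by omega)]; ring
  calc ∑ j ∈ Finset.range (n+3), F j
      = ∑ j ∈ Finset.range (n+2), F (j+1) + F 0 := Finset.sum_range_succ' F (n+2)
    _ = ∑ j ∈ Finset.range (n+2), (G (j+1) + (-(z^(n+2)*x)) * T j) + F 0 := by
        rw [Finset.sum_congr rfl key]
    _ = ((∑ j ∈ Finset.range (n+1), G (j+1) + G 0)
          + (-(z^(n+2)*x)) * ∑ j ∈ Finset.range (n+1), T j)
          + (G (n+2) + (-(z^(n+2)*x)) * T (n+1) + (F 0 - G 0)) := by
        rw [Finset.sum_add_distrib, ← Finset.mul_sum, Finset.sum_range_succ (fun j => G (j+1)),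
          Finset.sum_range_succ T]
        ring
    _ = ∑ j ∈ Finset.range (n+2), G j
        - z^(n+2) * x * ∑ j ∈ Finset.range (n+1), T j := by
        rw [← Finset.sum_range_succ' G (n+1), hF0, hG0, hGn2, hTn1]; ring


/-- The convergent numerators/denominators P_n, Q_n of the continued fraction for
escalier polyominoes, defined by P_n = P_{n-1} - zⁿx P_{n-2}, Q_n = Q_{n-1} - zⁿx Q_{n-2}
with P_{-1}=0, P₀=Q_{-1}=Q₀=1 (so P₁ = 1, Q₁ = 1 - zx), have the explicit forms
P_n = ∑_j qbinom(n-j,j)(-1)^j z^{j²+j} x^j and Q_n = ∑_j qbinom(n+1-j,j)(-1)^j z^{j²} x^j,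
where qbinom is the Gaussian binomial in variable z. -/
theorem escalier_convergents (x z : ℝ) (hz : ∀ i : ℕ, 1 ≤ i → z ^ i ≠ 1)
    (P Q : ℕ → ℝ)
    (hP0 : P 0 = 1) (hP1 : P 1 = 1)
    (hQ0 : Q 0 = 1) (hQ1 : Q 1 = 1 - z * x)
    (hPrec : ∀ n : ℕ, P (n + 2) = P (n + 1) - z ^ (n + 2) * x * P n)
    (hQrec : ∀ n : ℕ, Q (n + 2) = Q (n + 1) - z ^ (n + 2) * x * Q n) :
    let qbinom : ℕ → ℕ → ℝ := fun m j =>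
      if j ≤ m then ∏ i ∈ Finset.range j, (1 - z ^ (m - j + i + 1)) / (1 - z ^ (i + 1))
      else 0
    ∀ n : ℕ,
      P n = ∑ j ∈ Finset.range (n + 1),
        qbinom (n - j) j * (-1) ^ j * z ^ (j^2 + j) * x ^ j ∧
      Q n = ∑ j ∈ Finset.range (n + 1),
        qbinom (n + 1 - j) j * (-1) ^ j * z ^ (j^2) * x ^ j := by
  intro qbinom
  show ∀ n : ℕ,
      P n = ∑ j ∈ Finset.range (n + 1),
        qb z (n - j) j * (-1) ^ j * z ^ (j^2 + j) * x ^ j ∧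
      Q n = ∑ j ∈ Finset.range (n + 1),
        qb z (n + 1 - j) j * (-1) ^ j * z ^ (j^2) * x ^ j
  set A : ℕ → ℝ := fun n => ∑ j ∈ Finset.range (n + 1),
      qb z (n - j) j * (-1) ^ j * z ^ (j^2 + j) * x ^ j with hA
  set B : ℕ → ℝ := fun n => ∑ j ∈ Finset.range (n + 1),
      qb z (n + 1 - j) j * (-1) ^ j * z ^ (j^2) * x ^ j with hB
  have hA0 : A 0 = 1 := by
    simp [hA, Finset.sum_range_one, qb_zero]
  have hA1 : A 1 = 1 := by
    have h01 : qb z 0 1 = 0 := qb_of_lt z (by omega)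
    simp [hA, Finset.sum_range_succ, Finset.sum_range_one, qb_zero, h01]
  have hB0 : B 0 = 1 := by
    simp [hB, Finset.sum_range_one, qb_zero]
  have hB1 : B 1 = 1 - z * x := by
    have h11 : qb z 1 1 = 1 := qb_self z hz 1
    simp [hB, Finset.sum_range_succ, Finset.sum_range_one, qb_zero, h11]
    ring
  have H : ∀ n : ℕ, (P n = A n ∧ Q n = B n) ∧ (P (n+1) = A (n+1) ∧ Q (n+1) = B (n+1)) := by
    intro n
    induction n with
    | zero => exact ⟨⟨hP0.trans hA0.symm, hQ0.trans hB0.symm⟩,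
        hP1.trans hA1.symm, hQ1.trans hB1.symm⟩
    | succ k ih =>
      refine ⟨ih.2, ?_, ?_⟩
      · rw [hPrec k, ih.2.1, ih.1.1]
        exact (A_rec x z hz k).symm
      · rw [hQrec k, ih.2.2, ih.1.2]
        exact (B_rec x z hz k).symm
  exact fun n => (H n).1
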